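/- Let n, s be nonnegative integers with n ≥ 2s and s ≥ 1. Then ∑_{r=0}^{s-1} (-1)^{s-r} C(n, r) · C(n-s-r-1, s-r-1) = -C(2s-1, s-1). -/

import Mathlib

/-- Binomial coefficient `C(n,r)` for integer arguments: zero if `r < 0` or
`0 ≤ n < r`, the usual binomial for `0 ≤ r ≤ n`, and the generalized binomial
for negative upper index. -/
def C (n r : ℤ) : ℤ :=
  if r < 0 then 0
  else if 0 ≤ n then (n.toNat.choose r.toNat : ℤ)
  else (-1) ^ r.toNat * ((r - n - 1).toNat.choose r.toNat : ℤ)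

lemma C_neg (n r : ℤ) (h : r < 0) : C n r = 0 := by simp [C, h]

lemma C_zero (n : ℤ) : C n 0 = 1 := by simp [C]

lemma C_nat (n k : ℕ) : C n k = n.choose k := by simp [C]

lemma C_negUpper (m k : ℕ) : C (-(m:ℤ)-1) k = (-1)^k * ((m + k).choose k) := by
  have h1 : ¬ ((k:ℤ) < 0) := by omega
  have h2 : ¬ ((0:ℤ) ≤ -(m:ℤ)-1) := by omega
  have h3 : ((k:ℤ) - (-(m:ℤ)-1) - 1).toNat = m + k := by omega
  simp [C, h1, h2, h3, Nat.add_comm]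
  intro h4; omega

lemma C_pascal (n r : ℤ) : C (n+1) r = C n r + C n (r-1) := by
  rcases lt_or_ge r 0 with hr | hr
  · rw [C_neg _ _ hr, C_neg _ _ hr, C_neg _ _ (by omega), add_zero]
  · obtain ⟨b, rfl⟩ := Int.eq_ofNat_of_zero_le hr
    rcases Nat.eq_zero_or_pos b with rfl | hb
    · simp [C_zero, C_neg]
    · obtain ⟨c, rfl⟩ : ∃ c, b = c + 1 := ⟨b - 1, by omega⟩
      have h2 : ((c + 1 : ℕ) : ℤ) - 1 = ((c : ℕ) : ℤ) := by push_cast; ring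
      rcases le_or_gt 0 n with hn | hn
      · obtain ⟨a, rfl⟩ := Int.eq_ofNat_of_zero_le hn
        have h1 : ((a : ℤ) + 1) = ((a + 1 : ℕ) : ℤ) := by push_cast; ring
        rw [h1, h2, C_nat, C_nat, C_nat]
        push_cast [Nat.choose_succ_succ]
        ring
      · obtain ⟨m, rfl⟩ : ∃ m : ℕ, n = -(m:ℤ) - 1 := ⟨(-n-1).toNat, by omega⟩
        rcases Nat.eq_zero_or_pos m with rfl | hm
        · rw [h2, show -((0:ℕ):ℤ) - 1 + 1 = (((0:ℕ)):ℤ) by norm_num,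
            C_nat, C_negUpper, C_negUpper]
          simp [Nat.choose_succ_self_right, pow_succ]
        · obtain ⟨m', rfl⟩ : ∃ m', m = m' + 1 := ⟨m - 1, by omega⟩
          rw [h2, show -((m'+1:ℕ):ℤ) - 1 + 1 = -((m':ℕ):ℤ) - 1 by push_cast; ring,
            C_negUpper, C_negUpper, C_negUpper]
          have hp : ((m'+1) + (c+1)).choose (c+1)
              = ((m'+1) + c).choose c + (m' + (c+1)).choose (c+1) := by
            rw [show (m'+1)+(c+1) = (m'+c+1)+1 by ring, Nat.choose_succ_succ]
            congr 2 <;> omega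
          rw [hp]
          push_cast
          ring

lemma altC (m : ℤ) (k : ℕ) :
    ∑ i ∈ Finset.range (k+1), (-1:ℤ)^(k-i) * C (m+1) i = C m k := by
  induction k with
  | zero => simp [C_zero]
  | succ k ih =>
    rw [Finset.sum_range_succ]
    have hc : ∀ i ∈ Finset.range (k+1),
        (-1:ℤ)^(k+1-i) * C (m+1) i = -((-1:ℤ)^(k-i) * C (m+1) i) := by
      intro i hi
      simp only [Finset.mem_range] at hi
      rw [show k+1-i = (k-i)+1 by omega, pow_succ]
      ring
    rw [Finset.sum_congr rfl hc, Finset.sum_neg_distrib, ih,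
      C_pascal m ((k+1:ℕ):ℤ), show ((k+1:ℕ):ℤ) - 1 = ((k:ℕ):ℤ) by push_cast; ring]
    simp

lemma main (s : ℕ) (hs : 1 ≤ s) (d : ℕ) :
    ∑ r ∈ Finset.range s,
      (-1 : ℤ) ^ (s - r) * C ((2*s+d : ℕ) : ℤ) r * C (((2*s+d : ℕ) : ℤ) - s - r - 1) ((s : ℤ) - r - 1)
      = -C (2 * (s : ℤ) - 1) ((s : ℤ) - 1) := by
  induction d with
  | zero =>
    have hterm : ∀ r ∈ Finset.range s,
        (-1 : ℤ) ^ (s - r) * C ((2*s+0 : ℕ) : ℤ) r * C (((2*s+0 : ℕ) : ℤ) - s - r - 1) ((s : ℤ) - r - 1)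
        = -((-1 : ℤ)^((s-1) - r) * C ((2 * (s : ℤ) - 1) + 1) r) := by
      intro r hr
      simp only [Finset.mem_range] at hr
      have e1 : ((2*s+0 : ℕ) : ℤ) - s - r - 1 = ((s - 1 - r : ℕ) : ℤ) := by push_cast [hr]; omega
      have e2 : (s : ℤ) - r - 1 = ((s - 1 - r : ℕ) : ℤ) := by push_cast [hr]; omega
      have e3 : ((2*s+0 : ℕ) : ℤ) = (2 * (s : ℤ) - 1) + 1 := by push_cast; ring
      rw [e1, e2, e3, C_nat, Nat.choose_self, show s - r = ((s-1) - r) + 1 by omega, pow_succ]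
      push_cast
      ring
    rw [Finset.sum_congr rfl hterm, Finset.sum_neg_distrib, neg_inj]
    have h := altC (2 * (s:ℤ) - 1) (s-1)
    rw [show (s-1)+1 = s by omega] at h
    rw [h]
    congr 1
    push_cast [hs]
    omega
  | succ d ih =>
    set N : ℤ := ((2*s+d : ℕ) : ℤ) with hN
    set u : ℕ → ℤ := fun r =>
      (-1:ℤ)^(s-r) * C N ((r:ℤ)-1) * C (N - s - r) ((s:ℤ) - r - 1) with hu
    have key : ∀ r ∈ Finset.range s,
        (-1 : ℤ) ^ (s - r) * C ((2*s+(d+1) : ℕ) : ℤ) r * C (((2*s+(d+1) : ℕ) : ℤ) - s - r - 1) ((s : ℤ) - r - 1)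
        = (-1 : ℤ) ^ (s - r) * C N r * C (N - s - r - 1) ((s : ℤ) - r - 1)
          + (u r - u (r+1)) := by
      intro r hr
      simp only [Finset.mem_range] at hr
      have eN : ((2*s+(d+1) : ℕ) : ℤ) = N + 1 := by rw [hN]; push_cast; ring
      have p1 : C (N+1) r = C N r + C N ((r:ℤ)-1) := C_pascal N r
      have p2 : C (N - s - r) ((s:ℤ)-r-1)
          = C (N-s-r-1) ((s:ℤ)-r-1) + C (N-s-r-1) ((s:ℤ)-r-2) := by
        have h := C_pascal (N-(s:ℤ)-(r:ℤ)-1) ((s:ℤ)-r-1)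
        rw [show N-(s:ℤ)-(r:ℤ)-1+1 = N-s-r by ring,
          show (s:ℤ)-(r:ℤ)-1-1 = (s:ℤ)-r-2 by ring] at h
        exact h
      have esgn : ((-1:ℤ))^(s-r) = -((-1:ℤ))^(s-(r+1)) := by
        rw [show s - r = (s-(r+1)) + 1 by omega, pow_succ]
        ring
      rw [eN, show N + 1 - s - r - 1 = N - s - r by ring, hu]
      simp only []
      rw [show ((r+1:ℕ):ℤ) - 1 = (r:ℤ) by push_cast; ring,
        show N - (s:ℤ) - ((r+1:ℕ):ℤ) = N - s - r - 1 by push_cast; ring,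
        show (s:ℤ) - ((r+1:ℕ):ℤ) - 1 = (s:ℤ) - r - 2 by push_cast; ring, p1, p2, esgn]
      ring
    rw [Finset.sum_congr rfl key, Finset.sum_add_distrib, Finset.sum_range_sub' u, ih]
    have hu0 : u 0 = 0 := by
      rw [hu]; simp only []
      rw [C_neg N (((0:ℕ):ℤ)-1) (by norm_num)]
      ring
    have hus : u s = 0 := by
      rw [hu]; simp only []
      rw [C_neg (N - (s:ℤ) - (s:ℤ)) ((s:ℤ)-(s:ℤ)-1) (by omega)]
      ring
    rw [hu0, hus]
    ring

theorem stmt_2 (n s : ℕ) (h : 2 * s ≤ n) (hs : 1 ≤ s) :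
    ∑ r ∈ Finset.range s,
      (-1 : ℤ) ^ (s - r) * C n r * C ((n : ℤ) - s - r - 1) ((s : ℤ) - r - 1)
      = -C (2 * (s : ℤ) - 1) ((s : ℤ) - 1) := by
  obtain ⟨d, rfl⟩ : ∃ d, n = 2*s + d := ⟨n - 2*s, by omega⟩
  exact main s hs d
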